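/- Let ζ ∈ Sym(Ω) be an involution on a finite set Ω with d_H(ζ, Id) ≥ 1 − ε. Then there exists a finite set Σ ⊇ Ω with |Σ| = 2·⌈|Ω|/2⌉ and a fixed-point-free involution τ ∈ Sym(Σ) such that d_H(ζ, τ) ≤ 2ε, where d_H uses the errors convention (points of Σ \ Ω always count as disagreements). -/

import Mathlib

/-- Normalized Hamming distance on `Sym(Ω)` for a finite type `Ω`. -/
noncomputable def dHp {Ω : Type*} [Fintype Ω] [DecidableEq Ω] (a b : Equiv.Perm Ω) : ℝ :=
  ((Finset.univ.filter fun x : Ω => a x ≠ b x).card : ℝ) / Fintype.card Ω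

/-- Normalized Hamming distance with errors between `ζ ∈ Sym(Ω)` and `τ ∈ Sym(S)`,
where `Ω` is embedded in `S` (the role of `Σ`) via `e`: the fraction of points of `S`
that are either outside the image of `e` (errors) or on which the two permutations
disagree. -/
noncomputable def dHemb {Ω S : Type*} [Fintype Ω] [Fintype S] [DecidableEq S]
    (e : Ω ↪ S) (ζ : Equiv.Perm Ω) (τ : Equiv.Perm S) : ℝ :=
  ((Finset.univ.filter fun y : S => ¬ ∃ x : Ω, e x = y ∧ e (ζ x) = τ y).card : ℝ) /
    Fintype.card S

section Aux

variable {Ω : Type*} [Fintype Ω] [DecidableEq Ω]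

/-- A finset closed under a fixed-point-free involution has even cardinality. -/
lemma aux_even_closed (ζ : Equiv.Perm Ω) (hζ : ∀ x, ζ (ζ x) = x) :
    ∀ s : Finset Ω, (∀ x ∈ s, ζ x ∈ s) → (∀ x ∈ s, ζ x ≠ x) → Even s.card := by
  intro s
  induction s using Finset.strongInduction with
  | _ s ih =>
    intro hclosed hne
    rcases s.eq_empty_or_nonempty with rfl | ⟨x, hx⟩
    · simp
    · have hzx : ζ x ∈ s := hclosed x hx
      have hxne : ζ x ≠ x := hne x hx
      set t := s \ {x, ζ x} with ht
      have hpair : ({x, ζ x} : Finset Ω) ⊆ s := by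
        intro y hy
        simp only [Finset.mem_insert, Finset.mem_singleton] at hy
        rcases hy with rfl | rfl <;> assumption
      have hsub : t ⊂ s := by
        refine Finset.ssubset_iff_of_subset (Finset.sdiff_subset) |>.mpr ?_
        exact ⟨x, hx, by simp [ht]⟩
      have htclosed : ∀ y ∈ t, ζ y ∈ t := by
        intro y hy
        simp only [ht, Finset.mem_sdiff, Finset.mem_insert, Finset.mem_singleton] at hy ⊢
        obtain ⟨hys, hyne⟩ := hy
        refine ⟨hclosed y hys, ?_⟩
        push_neg
        push_neg at hyne
        constructor
        · intro e; exact hyne.2 (by rw [← hζ y, e])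
        · intro e
          exact hyne.1 (ζ.injective e)
      have htne : ∀ y ∈ t, ζ y ≠ y := fun y hy =>
        hne y (Finset.mem_sdiff.mp hy).1
      have heven := ih t hsub htclosed htne
      have hcard : s.card = t.card + 2 := by
        have h2 : ({x, ζ x} : Finset Ω).card = 2 := by
          rw [Finset.card_insert_of_notMem (by simp [Ne.symm hxne]), Finset.card_singleton]
        rw [ht, Finset.card_sdiff_of_subset hpair, h2]
        have := Finset.card_le_card hpair
        omega
      rw [hcard]
      exact heven.add (Even.add_self 1)

lemma aux_even_filter (ζ : Equiv.Perm Ω) (hζ : ∀ x, ζ (ζ x) = x) :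
    Even (Finset.univ.filter fun x => ζ x ≠ x).card := by
  apply aux_even_closed ζ hζ
  · intro x hx
    simp only [Finset.mem_filter, Finset.mem_univ, true_and] at hx ⊢
    intro e
    exact hx (by rw [← hζ x, e, e])
  · intro x hx
    exact (Finset.mem_filter.mp hx).2

/-- Any finite type of even cardinality carries a fixed-point-free involution. -/
lemma exists_fpf_perm (α : Type*) [Fintype α] [DecidableEq α]
    (h : Even (Fintype.card α)) :
    ∃ τ : Equiv.Perm α, (∀ y, τ (τ y) = y) ∧ ∀ y, τ y ≠ y := by
  obtain ⟨m, hm⟩ := h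
  have hc : Fintype.card α = Fintype.card (Fin m × Bool) := by
    simp only [Fintype.card_prod, Fintype.card_fin, Fintype.card_bool, hm]
    ring
  let e : α ≃ Fin m × Bool := Fintype.equivOfCardEq hc
  let σ : Equiv.Perm (Fin m × Bool) :=
    Equiv.prodCongr (Equiv.refl (Fin m)) (Equiv.swap true false)
  have hσ2 : ∀ z, σ (σ z) = z := by
    rintro ⟨a, b⟩
    simp [σ]
  have hσne : ∀ z, σ z ≠ z := by
    rintro ⟨a, b⟩ hz
    have : Equiv.swap true false b = b := congrArg Prod.snd hz
    cases b <;> simp [Equiv.swap_apply_def] at this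
  refine ⟨e.trans (σ.trans e.symm), ?_, ?_⟩
  · intro y
    simp [hσ2]
  · intro y hy
    simp only [Equiv.trans_apply] at hy
    have : σ (e y) = e y := by
      have := congrArg e hy
      simpa using this
    exact hσne _ this

variable (ζ : Equiv.Perm Ω) (k : ℕ)

/-- The predicate on `Ω ⊕ Fin k` singling out the non-fixed points of `ζ`. -/
def pGood : Ω ⊕ Fin k → Prop := Sum.elim (fun x => ζ x ≠ x) (fun _ => False)

instance : DecidablePred (pGood ζ k) := fun s => by
  cases s <;> simp only [pGood, Sum.elim_inl, Sum.elim_inr] <;> infer_instance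

/-- `ζ` restricted to the good part of `Ω ⊕ Fin k`. -/
def goodFun (hζ : ∀ x, ζ (ζ x) = x) :
    {s : Ω ⊕ Fin k // pGood ζ k s} → {s : Ω ⊕ Fin k // pGood ζ k s}
  | ⟨Sum.inl x, h⟩ => ⟨Sum.inl (ζ x), by
      simp only [pGood, Sum.elim_inl] at h ⊢
      rw [hζ]
      exact fun e => h e.symm⟩
  | ⟨Sum.inr _, h⟩ => absurd h (by simp [pGood])

lemma goodFun_invol (hζ : ∀ x, ζ (ζ x) = x) :
    Function.Involutive (goodFun ζ k hζ) := by
  rintro ⟨x | y, h⟩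
  · apply Subtype.ext
    simp [goodFun, hζ]
  · exact absurd h (by simp [pGood])

lemma goodFun_inl (hζ : ∀ x, ζ (ζ x) = x) (x : Ω) (h : pGood ζ k (Sum.inl x)) :
    goodFun ζ k hζ ⟨Sum.inl x, h⟩ = ⟨Sum.inl (ζ x), (goodFun ζ k hζ ⟨Sum.inl x, h⟩).2⟩ := by
  apply Subtype.ext
  simp [goodFun]

end Aux

theorem stmt3 {Ω : Type*} [Fintype Ω] [DecidableEq Ω] (ζ : Equiv.Perm Ω)
    (hζ : ζ ^ 2 = 1) (ε : ℝ) (h : 1 - ε ≤ dHp ζ 1) :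
    ∃ (e : Ω ↪ Fin (2 * ((Fintype.card Ω + 1) / 2)))
      (τ : Equiv.Perm (Fin (2 * ((Fintype.card Ω + 1) / 2)))),
      τ ^ 2 = 1 ∧ (∀ y, τ y ≠ y) ∧ dHemb e ζ τ ≤ 2 * ε := by
  classical
  have hζ' : ∀ x, ζ (ζ x) = x := by
    intro x
    have := Equiv.Perm.ext_iff.mp hζ x
    simpa [pow_two, Equiv.Perm.mul_apply] using this
  set n := Fintype.card Ω with hn
  set N := 2 * ((n + 1) / 2) with hNdef
  have hnN : n ≤ N ∧ N ≤ n + 1 := by omega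
  set k := N - n with hk
  have hcardS : Fintype.card (Ω ⊕ Fin k) = N := by
    simp only [Fintype.card_sum, Fintype.card_fin, ← hn]
    omega
  let eqS : Ω ⊕ Fin k ≃ Fin N := Fintype.equivFinOfCardEq hcardS
  -- cardinality bookkeeping
  set Gn := (Finset.univ.filter fun x : Ω => ζ x ≠ x).card with hGn
  have hGcard : Fintype.card {s : Ω ⊕ Fin k // pGood ζ k s} = Gn := by
    rw [Fintype.card_congr (Equiv.subtypeSum (p := pGood ζ k))]
    have h1 : Fintype.card {x : Ω // pGood ζ k (Sum.inl x)} = Gn := by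
      rw [Fintype.card_congr (Equiv.subtypeEquivRight (q := fun x : Ω => ζ x ≠ x)
        (fun x => by simp [pGood]))]
      simp [Fintype.card_subtype, hGn]
    have h2 : Fintype.card {y : Fin k // pGood ζ k (Sum.inr y)} = 0 := by
      simp [Fintype.card_eq_zero_iff]
      refine ⟨fun ⟨y, hy⟩ => ?_⟩
      simp [pGood] at hy
    simp [Fintype.card_sum, h1, h2]
  have hGle : Gn ≤ N := by
    have := Fintype.card_subtype_le (pGood ζ k)
    rw [hGcard, hcardS] at this
    exact this
  have hGeven : Even Gn := aux_even_filter ζ hζ'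
  have hbadcard : Fintype.card {s : Ω ⊕ Fin k // ¬ pGood ζ k s} = N - Gn := by
    rw [Fintype.card_subtype_compl, hGcard, hcardS]
  have hbadeven : Even (Fintype.card {s : Ω ⊕ Fin k // ¬ pGood ζ k s}) := by
    rw [hbadcard]
    obtain ⟨a, ha⟩ := hGeven
    exact ⟨(n + 1) / 2 - a, by omega⟩
  obtain ⟨σb, hσb1, hσb2⟩ := exists_fpf_perm _ hbadeven
  let σg : Equiv.Perm {s : Ω ⊕ Fin k // pGood ζ k s} :=
    Function.Involutive.toPerm _ (goodFun_invol ζ k hζ')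
  let τ₀ : Equiv.Perm (Ω ⊕ Fin k) := Equiv.Perm.subtypeCongr σg σb
  -- facts about τ₀
  have factA : ∀ (x : Ω), ζ x ≠ x → τ₀ (Sum.inl x) = Sum.inl (ζ x) := by
    intro x hx
    have hp : pGood ζ k (Sum.inl x) := by simp [pGood, hx]
    rw [show τ₀ (Sum.inl x) = _ from Equiv.Perm.subtypeCongr.left_apply σg σb hp]
    simp only [σg, Function.Involutive.coe_toPerm]
    rw [goodFun_inl]
  have factB : ∀ s, τ₀ (τ₀ s) = s := by
    intro s
    by_cases hp : pGood ζ k s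
    · have h1 : τ₀ s = ↑(σg ⟨s, hp⟩) := Equiv.Perm.subtypeCongr.left_apply σg σb hp
      have h2 : τ₀ ↑(σg ⟨s, hp⟩) = ↑(σg (σg ⟨s, hp⟩)) :=
        Equiv.Perm.subtypeCongr.left_apply_subtype σg σb _
      rw [h1, h2]
      have : σg (σg ⟨s, hp⟩) = ⟨s, hp⟩ := goodFun_invol ζ k hζ' ⟨s, hp⟩
      rw [this]
    · have h1 : τ₀ s = ↑(σb ⟨s, hp⟩) := Equiv.Perm.subtypeCongr.right_apply σg σb hp
      have h2 : τ₀ ↑(σb ⟨s, hp⟩) = ↑(σb (σb ⟨s, hp⟩)) :=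
        Equiv.Perm.subtypeCongr.right_apply_subtype σg σb _
      rw [h1, h2, hσb1]
  have factC : ∀ s, τ₀ s ≠ s := by
    intro s
    by_cases hp : pGood ζ k s
    · have h1 : τ₀ s = ↑(σg ⟨s, hp⟩) := Equiv.Perm.subtypeCongr.left_apply σg σb hp
      rw [h1]
      rcases s with x | y
      · have hx : ζ x ≠ x := by simpa [pGood] using hp
        simp only [σg, Function.Involutive.coe_toPerm]
        rw [goodFun_inl]
        simp only [ne_eq, Sum.inl.injEq]
        exact hx
      · exact absurd hp (by simp [pGood])
    · have h1 : τ₀ s = ↑(σb ⟨s, hp⟩) := Equiv.Perm.subtypeCongr.right_apply σg σb hp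
      rw [h1]
      intro e
      exact hσb2 ⟨s, hp⟩ (Subtype.ext e)
  -- the final data
  refine ⟨⟨fun x => eqS (Sum.inl x), fun a b hab => by
    simpa using eqS.injective hab⟩,
    eqS.permCongr τ₀, ?_, ?_, ?_⟩
  · ext y
    simp only [pow_two, Equiv.Perm.mul_apply, Equiv.Perm.one_apply,
      Equiv.permCongr_apply, Equiv.symm_apply_apply]
    rw [factB]
    simp
  · intro y hy
    simp only [Equiv.permCongr_apply] at hy
    have : τ₀ (eqS.symm y) = eqS.symm y := by
      have := congrArg eqS.symm hy
      simpa using this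
    exact factC _ this
  · -- the distance bound
    rw [dHemb]
    set D := (Finset.univ.filter fun y : Fin N =>
      ¬ ∃ x : Ω, (⟨fun x => eqS (Sum.inl x), fun a b hab => by
        simpa using eqS.injective hab⟩ : Ω ↪ Fin N) x = y ∧
        (⟨fun x => eqS (Sum.inl x), fun a b hab => by
          simpa using eqS.injective hab⟩ : Ω ↪ Fin N) (ζ x) = eqS.permCongr τ₀ y) with hD
    have hsub : D ⊆ Finset.univ.filter fun y : Fin N => ¬ pGood ζ k (eqS.symm y) := by
      intro y hy
      simp only [hD, Finset.mem_filter, Finset.mem_univ, true_and] at hy ⊢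
      intro hpg
      apply hy
      rcases hs : eqS.symm y with x | j
      · rw [hs] at hpg
        have hx : ζ x ≠ x := by simpa [pGood] using hpg
        refine ⟨x, ?_, ?_⟩
        · show eqS (Sum.inl x) = y
          rw [← hs, Equiv.apply_symm_apply]
        · show eqS (Sum.inl (ζ x)) = eqS.permCongr τ₀ y
          rw [Equiv.permCongr_apply, hs, factA x hx]
      · rw [hs] at hpg
        exact absurd hpg (by simp [pGood])
    have hcardD : D.card ≤ N - Gn := by
      have h1 := Finset.card_le_card hsub
      have h2 : (Finset.univ.filter fun y : Fin N => ¬ pGood ζ k (eqS.symm y)).card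
          = N - Gn := by
        rw [← Fintype.card_subtype]
        rw [Fintype.card_congr (Equiv.subtypeEquiv eqS.symm (fun y => Iff.rfl)).symm] at hbadcard
        exact hbadcard
      omega
    -- now the arithmetic
    rw [Fintype.card_fin]
    rcases Nat.eq_zero_or_pos n with hn0 | hnpos
    · have hN0 : N = 0 := by omega
      have hε1 : 1 ≤ ε := by
        rw [dHp, ← hn, hn0] at h
        simp at h
        linarith
      have : D.card = 0 := by
        have := Finset.card_le_card (Finset.subset_univ D)
        simp only [Finset.card_univ, Fintype.card_fin, hN0] at this
        omega
      rw [this, hN0]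
      norm_num
      linarith
    · have hNpos : 0 < N := by omega
      have hmain : 1 - ε ≤ (Gn : ℝ) / n := by
        rw [dHp, ← hn] at h
        have heq : (Finset.univ.filter fun x : Ω => ζ x ≠ (1 : Equiv.Perm Ω) x)
            = (Finset.univ.filter fun x : Ω => ζ x ≠ x) := by
          apply Finset.filter_congr
          intro x _
          simp
        rw [heq] at h
        exact_mod_cast h
      have hnR : (0 : ℝ) < n := by exact_mod_cast hnpos
      have hkey : (n : ℝ) - Gn ≤ ε * n := by
        rw [le_div_iff₀ hnR] at hmain
        nlinarith
      have hGlen : Gn ≤ n := by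
        have := Finset.card_le_card (Finset.subset_univ
          (Finset.univ.filter fun x : Ω => ζ x ≠ x))
        simpa [hGn, ← hn] using this
      have hε0 : 0 ≤ ε := by
        have : (Gn : ℝ) ≤ n := by exact_mod_cast hGlen
        nlinarith
      rw [div_le_iff₀ (by exact_mod_cast hNpos)]
      have hDle : (D.card : ℝ) ≤ (N : ℝ) - Gn := by
        have : ((N - Gn : ℕ) : ℝ) = (N : ℝ) - Gn := by
          push_cast [Nat.cast_sub hGle]
          ring
        rw [← this]
        exact_mod_cast hcardD
      have hfin : (N : ℝ) - Gn ≤ 2 * ε * N := by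
        rcases Nat.even_or_odd n with hne | hno
        · have hNn : N = n := by
            obtain ⟨a, ha⟩ := hne
            omega
          rw [hNn]
          nlinarith
        · have hNn : N = n + 1 := by
            obtain ⟨a, ha⟩ := hno
            omega
          have h1le : 1 ≤ n - Gn := by
            obtain ⟨a, ha⟩ := hGeven
            obtain ⟨b, hb⟩ := hno
            omega
          have h1leR : (1 : ℝ) ≤ (n : ℝ) - Gn := by
            have : ((n - Gn : ℕ) : ℝ) = (n : ℝ) - Gn := by
              push_cast [Nat.cast_sub hGlen]
              ring
            rw [← this]
            exact_mod_cast h1le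
          have hNR : (N : ℝ) = n + 1 := by exact_mod_cast congrArg Nat.cast hNn
          rw [hNR]
          nlinarith
      linarith
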